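/- Let w be a stable compatible matching on a cell complex X which is embeddable into H_n via incidence embedding ι, with w(ξ) = α_{i(ξ)}(ξ) where α_i is the pullback of the bit-flip matching M_i. Then w is acyclic: there is no closed flowline ξ₀ ≺ w(ξ₀) ≻ ξ₁ ≺ w(ξ₁) ≻ … ≻ ξ_k ≺ w(ξ_k) ≻ ξ₀ with all cells distinct. -/

import Mathlib

/-- Dimension of a cell of the hypercube complex: number of 1 coordinates. -/
def hdim {n : ℕ} (x : Fin n → Bool) : ℕ :=
  (Finset.univ.filter (fun j => x j = true)).card

/-- Flip the i-th bit. -/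
def bflip {n : ℕ} (i : Fin n) (x : Fin n → Bool) : Fin n → Bool :=
  fun j => if j = i then !(x j) else x j

/-- Primary face relation in the hypercube complex. -/
def primFace {n : ℕ} (x' x : Fin n → Bool) : Prop :=
  (∀ j, x' j ≤ x j) ∧ hdim x = hdim x' + 1

lemma bflip_bflip {n : ℕ} (i : Fin n) (x : Fin n → Bool) : bflip i (bflip i x) = x := by
  funext j; by_cases h : j = i <;> simp [bflip, h]

lemma bflip_apply_ne {n : ℕ} {i j : Fin n} (x : Fin n → Bool) (h : j ≠ i) :
    bflip i x j = x j := by simp [bflip, h]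

lemma bflip_apply_self {n : ℕ} (i : Fin n) (x : Fin n → Bool) :
    bflip i x i = !(x i) := by simp [bflip]

/-- If `x'` is a primary face of `x` and they differ at `j`, then `x' = bflip j x`. -/
lemma primFace_eq_bflip {n : ℕ} {x' x : Fin n → Bool} (h : primFace x' x) {j : Fin n}
    (hj' : x' j = false) (hj : x j = true) : x' = bflip j x := by
  obtain ⟨hle, hd⟩ := h
  set S := Finset.univ.filter (fun t => x t = true) with hSdef
  set S' := Finset.univ.filter (fun t => x' t = true) with hS'def
  have hsub : S' ⊆ S := by
    intro t ht
    simp only [hSdef, hS'def, Finset.mem_filter, Finset.mem_univ, true_and] at *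
    have h2 := hle t
    rw [ht] at h2
    cases hxt : x t
    · rw [hxt] at h2; exact absurd h2 (by decide)
    · rfl
  have hcard : (S \ S').card = 1 := by
    rw [Finset.card_sdiff_of_subset hsub]
    have : S.card = S'.card + 1 := hd
    omega
  have hjmem : j ∈ S \ S' := by
    simp [hSdef, hS'def, Finset.mem_sdiff, hj, hj']
  have hsingle : S \ S' = {j} := by
    obtain ⟨a, ha⟩ := Finset.card_eq_one.mp hcard
    rw [ha] at hjmem ⊢
    rw [Finset.mem_singleton.mp hjmem]
  funext t
  by_cases htj : t = j
  · subst htj; simp [bflip, hj, hj']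
  · rw [bflip_apply_ne x htj]
    by_contra hne
    have h2 := hle t
    have h3 : x' t = false ∧ x t = true := by
      cases hx't : x' t <;> cases hxt : x t
      · exact absurd (hx't.trans hxt.symm) hne
      · exact ⟨rfl, rfl⟩
      · rw [hx't, hxt] at h2; exact absurd h2 (by decide)
      · exact absurd (hx't.trans hxt.symm) hne
    have : t ∈ S \ S' := by
      simp [hSdef, hS'def, Finset.mem_sdiff, h3.1, h3.2]
    rw [hsingle, Finset.mem_singleton] at this
    exact htj this

/-- If `P` holds at `a` but not at `a + d`, there is a transition point. -/
lemma exists_transition (P : ℕ → Prop) : ∀ d a, P a → ¬ P (a + d) → ∃ p, a ≤ p ∧ P p ∧ ¬ P (p + 1) := by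
  intro d
  induction d with
  | zero => intro a h h'; simp at h'; exact absurd h h'
  | succ d ih =>
    intro a h h'
    by_cases h1 : P (a + 1)
    · obtain ⟨p, hp1, hp2, hp3⟩ := ih (a + 1) h1 (by rwa [show a + 1 + d = a + (d + 1) by omega])
      exact ⟨p, by omega, hp2, hp3⟩
    · exact ⟨a, le_refl a, h, h1⟩

/-- A stable compatible matching on a cell complex embeddable into the hypercube
complex, built from the pullbacks `α i` of the bit-flip matchings `M_i`, is
acyclic: there is no closed flowline. -/
theorem stable_compatible_acyclic {X : Type} [Fintype X]
    (n : ℕ) (prec : X → X → Prop) (ι : X → (Fin n → Bool))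
    (hinj : Function.Injective ι)
    (hembed : ∀ ξ' ξ, prec ξ' ξ ↔ primFace (ι ξ') (ι ξ))
    (α : Fin n → X → X)
    (hα : ∀ i ξ, (bflip i (ι ξ) ∈ Set.range ι → ι (α i ξ) = bflip i (ι ξ)) ∧
                 (bflip i (ι ξ) ∉ Set.range ι → α i ξ = ξ))
    (w : X → X) (idx : X → Fin n)
    (hinvw : ∀ ξ, w (w ξ) = ξ)
    (htri : ∀ ξ, w ξ = ξ ∨ prec ξ (w ξ) ∨ prec (w ξ) ξ)
    (hcompat : ∀ ξ, w ξ ≠ ξ → w ξ = α (idx ξ) ξ)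
    (hstable : ¬ ∃ (ξ₀ ξ₁ : X) (i : Fin n),
      prec ξ₀ (w ξ₀) ∧ prec ξ₁ (w ξ₀) ∧ prec ξ₁ (w ξ₁) ∧ ξ₁ ≠ ξ₀ ∧
      i < idx ξ₀ ∧ i < idx ξ₁ ∧ α i ξ₁ = w ξ₀) :
    ∀ ξ, ¬ Relation.TransGen
      (fun ξ₁ ξ₀ => prec ξ₁ (w ξ₀) ∧ ξ₁ ≠ ξ₀ ∧
        prec ξ₀ (w ξ₀) ∧ prec ξ₁ (w ξ₁)) ξ ξ := by
  intro ξ hcyc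
  set R : X → X → Prop := fun ξ₁ ξ₀ => prec ξ₁ (w ξ₀) ∧ ξ₁ ≠ ξ₀ ∧
      prec ξ₀ (w ξ₀) ∧ prec ξ₁ (w ξ₁) with hR
  -- basic facts about upward matched steps
  have hprec_ne : ∀ ζ, prec ζ (w ζ) → w ζ ≠ ζ := by
    intro ζ h heq
    rw [heq] at h
    have h2 := ((hembed ζ ζ).mp h).2
    omega
  have hup : ∀ ζ, prec ζ (w ζ) →
      ι (w ζ) = bflip (idx ζ) (ι ζ) ∧ ι ζ (idx ζ) = false := by
    intro ζ h
    have hne := hprec_ne ζ h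
    have hw := hcompat ζ hne
    have hr : bflip (idx ζ) (ι ζ) ∈ Set.range ι := by
      by_contra hr
      exact hne (hw.trans ((hα (idx ζ) ζ).2 hr))
    have h1 : ι (w ζ) = bflip (idx ζ) (ι ζ) := by rw [hw]; exact (hα _ ζ).1 hr
    refine ⟨h1, ?_⟩
    have hle := ((hembed ζ (w ζ)).mp h).1 (idx ζ)
    rw [h1, bflip_apply_self] at hle
    cases hb : ι ζ (idx ζ)
    · rfl
    · rw [hb] at hle; exact absurd hle (by decide)
  -- extract a cyclic chain as a list
  have hswap : Relation.TransGen (Function.swap R) ξ ξ := Relation.transGen_swap.mpr hcyc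
  obtain ⟨b, hab, hbξ⟩ := Relation.TransGen.tail'_iff.mp hswap
  obtain ⟨l₀, hchain, hlast⟩ := List.exists_isChain_cons_of_relationReflTransGen hab
  set L : List X := (ξ :: l₀) ++ [ξ] with hLdef
  have hchainL : List.IsChain (Function.swap R) L := by
    apply List.IsChain.append
    · exact hchain
    · simp
    · intro x hx y hy
      simp only [List.head?] at hy
      have hgl : (ξ :: l₀).getLast? = some b := by
        rw [List.getLast?_eq_getLast (by simp), hlast]
      rw [hgl] at hx
      simp at hx hy
      rw [← hx, ← hy]
      exact hbξ
  set k : ℕ := l₀.length + 1 with hk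
  have hk1 : 1 ≤ k := by omega
  have hLlen : L.length = k + 1 := by simp [hLdef, hk]
  have hmodlt : ∀ m : ℕ, m % k < L.length := by
    intro m
    have := Nat.mod_lt m (show 0 < k by omega)
    omega
  set c : ℕ → X := fun m => L.get ⟨m % k, hmodlt m⟩ with hc
  have hgetk : L.get ⟨k, by omega⟩ = ξ := by
    rw [List.get_eq_getElem]
    show ((ξ :: l₀) ++ [ξ])[k]'_ = ξ
    rw [List.getElem_append_right (by simp [hk])]
    simp [hk]
  have hget0 : L.get ⟨0 % k, hmodlt 0⟩ = ξ := by
    have : (0 : ℕ) % k = 0 := Nat.zero_mod k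
    simp only [this]
    rfl
  -- the chain steps, via chain'_iff_get
  have hstepL : ∀ t (ht : t < k), Function.swap R (L.get ⟨t, by omega⟩) (L.get ⟨t + 1, by omega⟩) := by
    intro t ht
    exact List.IsChain.getElem hchainL t (by omega)
  have hstep : ∀ m, R (c (m + 1)) (c m) := by
    intro m
    have hdm := Nat.div_add_mod m k
    have hrlt : m % k < k := Nat.mod_lt m (by omega)
    have key : (m + 1) % k = (m % k + 1) % k := by
      conv_lhs => rw [← hdm]
      rw [Nat.add_assoc, Nat.mul_add_mod]
    by_cases h2 : m % k + 1 < k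
    · have key2 : (m + 1) % k = m % k + 1 := by rw [key, Nat.mod_eq_of_lt h2]
      have : c (m + 1) = L.get ⟨m % k + 1, by omega⟩ := by
        simp only [hc]; congr 1; exact Fin.ext key2
      rw [this]
      exact hstepL (m % k) hrlt
    · have hke : m % k + 1 = k := by omega
      have key2 : (m + 1) % k = 0 := by rw [key, hke, Nat.mod_self]
      have h3 : c (m + 1) = ξ := by
        have h5 : c (m + 1) = c 0 := by
          simp only [hc]
          congr 1
          exact Fin.ext (key2.trans (Nat.zero_mod k).symm)
        rw [h5]
        exact hget0
      have h4 := hstepL (m % k) hrlt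
      rw [show (⟨m % k + 1, by omega⟩ : Fin L.length) = ⟨k, by omega⟩ from Fin.ext hke, hgetk] at h4
      rw [h3]
      exact h4
  have hper : ∀ m, c (m % k) = c m := by
    intro m
    simp only [hc]
    congr 1
    exact Fin.ext (Nat.mod_eq_of_lt (Nat.mod_lt m (by omega)))
  -- every cell in the cycle is lower endpoint of its matched edge
  have hstep1 : ∀ m, prec (c (m + 1)) (w (c m)) := fun m => (hstep m).1
  have hstep2 : ∀ m, c (m + 1) ≠ c m := fun m => (hstep m).2.1
  have hstep3 : ∀ m, prec (c m) (w (c m)) := fun m => (hstep m).2.2.1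
  have hkey : ∀ m, ι (w (c m)) = bflip (idx (c m)) (ι (c m)) ∧ ι (c m) (idx (c m)) = false :=
    fun m => hup (c m) (hstep3 m)
  -- minimal index along the cycle
  set S : Finset (Fin n) := (Finset.range k).image (fun m => idx (c m)) with hS
  have hSne : S.Nonempty := ⟨idx (c 0), Finset.mem_image.mpr ⟨0, Finset.mem_range.mpr (by omega), rfl⟩⟩
  set istar : Fin n := S.min' hSne with histar
  have hmin : ∀ m, istar ≤ idx (c m) := by
    intro m
    apply S.min'_le
    rw [← hper m]
    exact Finset.mem_image.mpr ⟨m % k, Finset.mem_range.mpr (Nat.mod_lt m (by omega)), rfl⟩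
  obtain ⟨m₀, hm₀r, hm₀⟩ := Finset.mem_image.mp (S.min'_mem hSne)
  rw [← histar] at hm₀
  -- at step m₀ the bit istar is switched on
  have hx0 : ι (c m₀) istar = false := by rw [← hm₀]; exact (hkey m₀).2
  have hy0 : ι (w (c m₀)) istar = true := by
    rw [(hkey m₀).1, hm₀, bflip_apply_self, hx0]; rfl
  have hP1 : ι (c (m₀ + 1)) istar = true := by
    by_contra h
    have h' : ι (c (m₀ + 1)) istar = false := by
      cases hv : ι (c (m₀ + 1)) istar
      · rfl
      · exact absurd hv h
    have hpf : primFace (ι (c (m₀ + 1))) (ι (w (c m₀))) := (hembed _ _).mp (hstep1 m₀)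
    have heq := primFace_eq_bflip hpf h' hy0
    rw [(hkey m₀).1, hm₀, bflip_bflip] at heq
    exact hstep2 m₀ (hinj heq)
  have hPk : ¬ ι (c (m₀ + k)) istar = true := by
    have hck : c (m₀ + k) = c m₀ := by
      rw [← hper (m₀ + k), ← hper m₀, Nat.add_mod_right]
    rw [hck, hx0]
    simp
  -- find the step where bit istar is switched off
  obtain ⟨p, hple, hPp, hPp1⟩ := exists_transition (fun m => ι (c m) istar = true) (k - 1) (m₀ + 1)
    hP1 (by rw [show m₀ + 1 + (k - 1) = m₀ + k by omega]; exact hPk)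
  have hPp1' : ι (c (p + 1)) istar = false := by
    cases hv : ι (c (p + 1)) istar
    · rfl
    · exact absurd hv hPp1
  -- set up the unstable pair (c p, c (p+1)) with index istar
  have hip_ne : idx (c p) ≠ istar := by
    intro h
    have h2 := (hkey p).2
    rw [h] at h2
    rw [h2] at hPp
    exact absurd hPp (by decide)
  have hyp : ι (w (c p)) istar = true := by
    rw [(hkey p).1, bflip_apply_ne _ (fun h => hip_ne h.symm)]
    exact hPp
  have hpf : primFace (ι (c (p + 1))) (ι (w (c p))) := (hembed _ _).mp (hstep1 p)
  have heq : ι (c (p + 1)) = bflip istar (ι (w (c p))) := primFace_eq_bflip hpf hPp1' hyp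
  have heq2 : bflip istar (ι (c (p + 1))) = ι (w (c p)) := by rw [heq, bflip_bflip]
  have halpha : α istar (c (p + 1)) = w (c p) := by
    apply hinj
    rw [(hα istar (c (p + 1))).1 (by rw [heq2]; exact ⟨w (c p), rfl⟩), heq2]
  have hlt0 : istar < idx (c p) := lt_of_le_of_ne (hmin p) (Ne.symm hip_ne)
  have hlt1 : istar < idx (c (p + 1)) := by
    refine lt_of_le_of_ne (hmin (p + 1)) (fun h => ?_)
    have h2 : ι (w (c (p + 1))) = ι (w (c p)) := by
      rw [(hkey (p + 1)).1, ← h, heq2]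
    have h3 : w (c (p + 1)) = w (c p) := hinj h2
    have h4 : c (p + 1) = c p := by
      rw [← hinvw (c (p + 1)), ← hinvw (c p), h3]
    exact hstep2 p h4
  exact hstable ⟨c p, c (p + 1), istar, hstep3 p, hstep1 p, hstep3 (p + 1), hstep2 p,
    hlt0, hlt1, halpha⟩
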